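/- arXiv:2506.00192 — 2 statements merged into one kernel-verified Lean document; each statement's English description precedes it below -/
import Mathlib

section
/- Let a be a complex vector of length p with |a_i| = 1 for all i, let b be any complex vector of length q, and let w be a complex vector of length p. Define A = a b^H (a p×q matrix). Then A^H diag(w) A = (∑_{i=1}^{p} w_i) · b b^H. In particular, taking w_i = (v₂)_i² with v₂ the quadratic index vector on a symmetric array gives the paper's Finding 3: A^H diag(v₂ ⊙ v₂) A = ‖v₂‖² · b b^H. -/
open Matrix

/-- Finding 3 of Proposition 1 (general form): for `A = a b^H` with `|a_i| = 1` for all `i`,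
`A^H diag(w) A = (∑ i, w i) • b b^H`. -/
theorem stmt_4 (p q : ℕ) (a : Fin p → ℂ) (ha : ∀ i, ‖a i‖ = 1)
    (b : Fin q → ℂ) (w : Fin p → ℂ) :
    (Matrix.vecMulVec a (star b))ᴴ * Matrix.diagonal w * Matrix.vecMulVec a (star b)
      = (∑ i, w i) • Matrix.vecMulVec b (star b) := by
  have key : ∀ i, star (a i) * a i = 1 := by
    intro i
    have h := Complex.mul_conj' (a i)
    rw [mul_comm] at h
    show (starRingEnd ℂ) (a i) * a i = 1
    rw [h]
    norm_cast
    rw [ha i]; norm_num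
  ext j k
  simp only [Matrix.mul_apply, Matrix.conjTranspose_apply, Matrix.vecMulVec_apply,
    Matrix.diagonal_apply, Matrix.smul_apply, smul_eq_mul, Pi.star_apply]
  have inner : ∀ x : Fin p,
      (∑ y : Fin p, star (a y * star (b j)) * if y = x then w y else 0)
        = star (a x) * b j * w x := by
    intro x
    rw [Finset.sum_eq_single x (by intro y _ hy; simp [hy]) (by simp)]
    simp [StarMul.star_mul, mul_comm]
  calc ∑ x : Fin p, (∑ y : Fin p, star (a y * star (b j)) * if y = x then w y else 0) *
        (a x * star (b k))
      = ∑ x : Fin p, w x * (b j * star (b k)) := by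
        refine Finset.sum_congr rfl fun x _ => ?_
        rw [inner x]
        calc star (a x) * b j * w x * (a x * star (b k))
            = (star (a x) * a x) * (b j * w x * star (b k)) := by ring
          _ = w x * (b j * star (b k)) := by rw [key x]; ring
    _ = (∑ i : Fin p, w i) * (b j * star (b k)) := by rw [Finset.sum_mul]
end

section
/- Let a ≤ b be real numbers, and let T₁, T₂, C₁₁, C₂, e be positive reals, C₁₀ a real with C₁₁·a + C₁₀ > 0, and c a real number. Define f(x) = T₁/(C₁₁ x + C₁₀) + T₂/(C₂ (x − c)² + e) for x ∈ [a, b]. If |a − c| ≤ |b − c|, then f attains its minimum over [a, b] at the right endpoint: f(b) ≤ f(x) for all x ∈ [a, b]. (The abstract content of Proposition 2: under the stated vertex condition, the optimal squared sensor interval is the largest feasible value d̃_s* = (M d_R / M_r)², i.e., the sensor array aperture equals the STAR array aperture.) -/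
/-- Proposition 2 (abstract form): with positive `T₁, T₂, C₁₁, C₂, e`, positive denominator
`C₁₁ a + C₁₀ > 0` at the left endpoint, and vertex condition `|a - c| ≤ |b - c|`, the function
`f(x) = T₁/(C₁₁ x + C₁₀) + T₂/(C₂ (x - c)² + e)` attains its minimum over `[a, b]` at `b`. -/
theorem stmt_7 (a b T₁ T₂ C₁₁ C₂ e C₁₀ c : ℝ)
    (hab : a ≤ b) (hT₁ : 0 < T₁) (hT₂ : 0 < T₂) (hC₁₁ : 0 < C₁₁) (hC₂ : 0 < C₂)
    (he : 0 < e) (hden : 0 < C₁₁ * a + C₁₀) (hvertex : |a - c| ≤ |b - c|) :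
    ∀ x ∈ Set.Icc a b,
      T₁ / (C₁₁ * b + C₁₀) + T₂ / (C₂ * (b - c) ^ 2 + e)
        ≤ T₁ / (C₁₁ * x + C₁₀) + T₂ / (C₂ * (x - c) ^ 2 + e) := by
  rintro x ⟨hax, hxb⟩
  have hx1 : 0 < C₁₁ * x + C₁₀ := lt_of_lt_of_le hden (by nlinarith)
  have habs : |x - c| ≤ |b - c| := by
    have := abs_le_max_abs_abs (sub_le_sub_right hax c) (sub_le_sub_right hxb c)
    exact this.trans (max_le hvertex le_rfl)
  have hsq : (x - c) ^ 2 ≤ (b - c) ^ 2 := by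
    rw [← sq_abs (x - c), ← sq_abs (b - c)]
    exact pow_le_pow_left₀ (abs_nonneg _) habs 2
  have hx2 : 0 < C₂ * (x - c) ^ 2 + e := by positivity
  gcongr <;> nlinarith
end
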